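/- If g ∈ C([0,1]) lies in the range of I − C, then g(0) = 0 and, for each x ∈ (0,1), the limit lim_{ε→0⁺} ∫_ε^x g(t)/t dt exists (is finite). -/

import Mathlib

open MeasureTheory

/-- The Cesàro average: `ces f x = (1/x) ∫₀ˣ f(t) dt` for `x ≠ 0`, `ces f 0 = f 0`. -/
noncomputable def ces (f : ℝ → ℂ) (x : ℝ) : ℂ :=
  if x = 0 then f 0 else (∫ t in (0:ℝ)..x, f t) / (x : ℂ)

theorem cesaro_range_necessary (g : ℝ → ℂ) (hg : ContinuousOn g (Set.Icc 0 1))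
    (hrange : ∃ f : ℝ → ℂ, ContinuousOn f (Set.Icc 0 1) ∧
      ∀ x ∈ Set.Icc (0:ℝ) 1, f x - ces f x = g x) :
    g 0 = 0 ∧ ∀ x ∈ Set.Ioo (0:ℝ) 1, ∃ L : ℂ,
      Filter.Tendsto (fun ε : ℝ => ∫ t in ε..x, g t / (t : ℂ))
        (nhdsWithin 0 (Set.Ioi 0)) (nhds L) := by
  obtain ⟨f, hf, hfg⟩ := hrange
  set F : ℝ → ℂ := fun x => ∫ t in (0:ℝ)..x, f t with hFdef
  have hint : ∀ b ∈ Set.Icc (0:ℝ) 1, IntervalIntegrable f volume 0 b := by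
    intro b hb
    apply (hf.mono _).intervalIntegrable
    rw [Set.uIcc_of_le hb.1]
    exact Set.Icc_subset_Icc le_rfl hb.2
  have h0 : g 0 = 0 := by
    have h := hfg 0 (by constructor <;> norm_num)
    simp [ces] at h
    exact h.symm
  refine ⟨h0, ?_⟩
  intro x hx
  -- derivative of F u / u is g u / u on (0,1)
  have hderiv : ∀ t ∈ Set.Ioo (0:ℝ) 1, HasDerivAt (fun u => F u / (u:ℂ)) (g t / (t:ℂ)) t := by
    intro t ht
    have htne : (t:ℂ) ≠ 0 := by exact_mod_cast ne_of_gt ht.1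
    have hct : ContinuousAt f t := hf.continuousAt (Icc_mem_nhds ht.1 ht.2)
    have hmeas : StronglyMeasurableAtFilter f (nhds t) volume :=
      (hf.mono Set.Ioo_subset_Icc_self).stronglyMeasurableAtFilter isOpen_Ioo t ht
    have hF' : HasDerivAt F (f t) t :=
      intervalIntegral.integral_hasDerivAt_right (hint t ⟨le_of_lt ht.1, le_of_lt ht.2⟩)
        hmeas hct
    have hcoe : HasDerivAt (fun u : ℝ => (u:ℂ)) 1 t := by
      simpa using (hasDerivAt_id t).ofReal_comp
    have h2 := hF'.div hcoe htne
    refine h2.congr_deriv (Eq.symm ?_)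
    have hg' : g t = f t - F t / (t:ℂ) := by
      have := hfg t ⟨le_of_lt ht.1, le_of_lt ht.2⟩
      rw [← this]
      simp [ces, ne_of_gt ht.1, F]
    rw [hg', div_eq_div_iff htne (pow_ne_zero 2 htne)]
    field_simp
  -- ces f ε → f 0 as ε → 0+
  have hmem : Set.Icc (0:ℝ) 1 ∈ nhdsWithin 0 (Set.Ici 0) := by
    rw [← Set.Ici_inter_Iic]
    exact Filter.inter_mem self_mem_nhdsWithin
      (mem_nhdsWithin_of_mem_nhds (Iic_mem_nhds one_pos))
  have hc0 : ContinuousWithinAt f (Set.Icc 0 1) 0 := hf 0 (by constructor <;> norm_num)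
  have hmem' : Set.Icc (0:ℝ) 1 ∈ nhdsWithin 0 (Set.Ioi 0) :=
    nhdsWithin_mono 0 Set.Ioi_subset_Ici_self hmem
  have hFd : HasDerivWithinAt F (f 0) (Set.Ici 0) 0 :=
    intervalIntegral.integral_hasDerivWithinAt_right (hint 0 (by norm_num))
      ⟨Set.Icc 0 1, hmem', hf.aestronglyMeasurable measurableSet_Icc⟩
      (hc0.mono_of_mem_nhdsWithin hmem')
  rw [hasDerivWithinAt_iff_tendsto_slope, Set.Ici_sdiff_left] at hFd
  have hces0 : Filter.Tendsto (fun ε : ℝ => ces f ε) (nhdsWithin 0 (Set.Ioi 0))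
      (nhds (f 0)) := by
    apply hFd.congr'
    filter_upwards [self_mem_nhdsWithin] with ε (hε : 0 < ε)
    simp [slope, ces, ne_of_gt hε, F, intervalIntegral.integral_same, Complex.real_smul,
      div_eq_inv_mul]
  refine ⟨ces f x - f 0, ?_⟩
  have hIoo : Set.Ioo (0:ℝ) x ∈ nhdsWithin 0 (Set.Ioi 0) :=
    Filter.inter_mem self_mem_nhdsWithin (mem_nhdsWithin_of_mem_nhds (Iio_mem_nhds hx.1))
  apply Filter.Tendsto.congr' _ ((tendsto_const_nhds.sub hces0))
  filter_upwards [hIoo] with ε hε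
  -- show ces f x - ces f ε = ∫ t in ε..x, g t / t
  have key : ∫ t in ε..x, g t / (t:ℂ) = F x / (x:ℂ) - F ε / (ε:ℂ) := by
    apply intervalIntegral.integral_eq_sub_of_hasDerivAt
    · intro t ht
      rw [Set.uIcc_of_le (le_of_lt hε.2)] at ht
      exact hderiv t ⟨lt_of_lt_of_le hε.1 ht.1, lt_of_le_of_lt ht.2 hx.2⟩
    · apply ContinuousOn.intervalIntegrable
      intro t ht
      rw [Set.uIcc_of_le (le_of_lt hε.2)] at ht
      have htpos : (0:ℝ) < t := lt_of_lt_of_le hε.1 ht.1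
      have h1 : ContinuousWithinAt g (Set.uIcc ε x) t := by
        rw [Set.uIcc_of_le (le_of_lt hε.2)]
        exact (hg t ⟨le_of_lt htpos, le_trans ht.2 (le_of_lt hx.2)⟩).mono
          (Set.Icc_subset_Icc (le_of_lt hε.1) (le_of_lt hx.2))
      exact h1.div (Complex.continuous_ofReal.continuousWithinAt)
        (by exact_mod_cast ne_of_gt htpos)
  rw [key]
  have hxne : x ≠ 0 := ne_of_gt hx.1
  have hεne : ε ≠ 0 := ne_of_gt hε.1
  simp [ces, hxne, hεne, F]
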